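/- arXiv:2105.05485 — 2 statements merged into one kernel-verified Lean document; each statement's English description precedes it below -/
import Mathlib

section
/- In the gamma-approximated detection model (Φ a random subset of {1,…,N} with P[Φ = S] = P_S = ∏_{k∈S} p_k ∏_{k∉S}(1−p_k); Z_S ~ Gamma(v_S, ω_S) for S ≠ ∅, Z_∅ = 0; Φ independent of (Z_S); P_j > 0, σ_w² > 0), let additionally H ~ Exp(1) be independent of Φ and (Z_S), and let P_t > 0, d_{tw} > 0, α > 0. Define ρ_1(x) = P_t d_{tw}^{−α} x + σ_w² and, for μ > σ_w², ρ_2 = (μ − σ_w²) d_{tw}^{α} / P_t. Then the average detection error probability ξ̄(μ) = P[P_j Z_Φ + σ_w² > μ] + E_H[ P[ρ_1(H) + P_j Z_Φ < μ | H] ] satisfies, for every μ > σ_w²: ξ̄(μ) = Σ_{∅≠S} P_S ( Γ(v_S, (μ−σ_w²)/(ω_S P_j))/Γ(v_S) − ∫_0^{ρ_2} e^{−x} Γ(v_S, (μ−ρ_1(x))/(ω_S P_j))/Γ(v_S) dx ) + 1 − e^{−ρ_2}. (Paper's Theorem 2, Eq. (22).) -/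
open MeasureTheory ProbabilityTheory Finset

/-- Discrete σ-algebra on finite sets, so that a random subset is a random variable. -/
instance (priority := low) {α : Type*} : MeasurableSpace (Finset α) := ⊤

/-- Upper incomplete gamma function `Γ(a, x) = ∫_x^∞ e^{-t} t^{a-1} dt`. -/
noncomputable def uGamma (a x : ℝ) : ℝ := ∫ t in Set.Ioi x, Real.exp (-t) * t ^ (a - 1)


section aux
open Real Set

lemma uGamma_zero {a : ℝ} (ha : 0 < a) : uGamma a 0 = Real.Gamma a :=
  (Real.Gamma_eq_integral ha).symm

lemma uGamma_integrableOn {a x : ℝ} (ha : 0 < a) (hx : 0 ≤ x) :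
    IntegrableOn (fun t => Real.exp (-t) * t ^ (a - 1)) (Set.Ioi x) :=
  (Real.GammaIntegral_convergent ha).mono_set (Set.Ioi_subset_Ioi hx)

lemma uGamma_nonneg {a x : ℝ} (hx : 0 ≤ x) : 0 ≤ uGamma a x :=
  setIntegral_nonneg measurableSet_Ioi fun t ht => by
    have h0 : (0:ℝ) ≤ t := le_trans hx (le_of_lt ht)
    positivity

lemma uGamma_anti {a x y : ℝ} (ha : 0 < a) (hx : 0 ≤ x) (hxy : x ≤ y) :
    uGamma a y ≤ uGamma a x := by
  refine setIntegral_mono_set (uGamma_integrableOn ha hx) ?_ ?_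
  · filter_upwards [ae_restrict_mem measurableSet_Ioi] with t ht
    have h0 : (0:ℝ) ≤ t := le_trans hx (le_of_lt ht)
    positivity
  · exact HasSubset.Subset.eventuallyLE (Set.Ioi_subset_Ioi hxy)

lemma uGamma_le_Gamma {a x : ℝ} (ha : 0 < a) (hx : 0 ≤ x) : uGamma a x ≤ Real.Gamma a := by
  rw [← uGamma_zero ha]; exact uGamma_anti ha le_rfl hx

lemma uGamma_one (x : ℝ) : uGamma 1 x = Real.exp (-x) := by
  simp only [uGamma, sub_self, rpow_zero, mul_one]
  exact integral_exp_neg_Ioi x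

lemma gammaMeasure_Ioi {a r c : ℝ} (ha : 0 < a) (hr : 0 < r) (hc : 0 ≤ c) :
    gammaMeasure a r (Set.Ioi c) = ENNReal.ofReal (uGamma a (r * c) / Real.Gamma a) := by
  rw [gammaMeasure, withDensity_apply _ measurableSet_Ioi]
  have h1 : ∫⁻ x in Ioi c, gammaPDF a r x
      = ∫⁻ x in Ioi c, ENNReal.ofReal (r ^ a / Gamma a * x ^ (a - 1) * exp (-(r * x))) := by
    refine setLIntegral_congr_fun measurableSet_Ioi (fun x hx => ?_)
    exact gammaPDF_of_nonneg (le_trans hc (le_of_lt hx))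
  rw [h1]
  have hint : IntegrableOn (fun x => r ^ a / Gamma a * x ^ (a - 1) * exp (-(r * x))) (Ioi c) := by
    have h2 : IntegrableOn (fun x => (r / Gamma a) * (Real.exp (-(r * x)) * (r * x) ^ (a - 1)))
        (Ioi c) := by
      exact (((integrableOn_Ioi_comp_mul_left_iff
        (fun t => Real.exp (-t) * t ^ (a - 1)) c hr).mpr
        (uGamma_integrableOn ha (by positivity))).const_mul _)
    refine h2.congr_fun (fun x hx => ?_) measurableSet_Ioi
    have hx0 : 0 ≤ x := le_trans hc (le_of_lt hx)
    dsimp only; rw [Real.mul_rpow hr.le hx0]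
    have hra : r ^ a = r * r ^ (a - 1) := by
      have := Real.rpow_add hr 1 (a - 1)
      simp only [Real.rpow_one] at this
      rw [← this]; ring_nf
    rw [hra]; ring
  rw [← ofReal_integral_eq_lintegral_ofReal hint (by
    filter_upwards [ae_restrict_mem measurableSet_Ioi] with x hx
    have hx0 : (0:ℝ) ≤ x := le_trans hc hx.le
    positivity)]
  congr 1
  have heq : ∫ x in Ioi c, r ^ a / Gamma a * x ^ (a - 1) * exp (-(r * x))
      = ∫ x in Ioi c, (r / Gamma a) * (Real.exp (-(r * x)) * (r * x) ^ (a - 1)) := by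
    refine setIntegral_congr_fun measurableSet_Ioi (fun x hx => ?_)
    have hx0 : 0 ≤ x := le_trans hc (le_of_lt hx)
    rw [Real.mul_rpow hr.le hx0]
    have hra : r ^ a = r * r ^ (a - 1) := by
      have := Real.rpow_add hr 1 (a - 1)
      simp only [Real.rpow_one] at this
      rw [← this]; ring_nf
    rw [hra]; ring
  rw [heq, integral_const_mul,
    integral_comp_mul_left_Ioi (fun t => Real.exp (-t) * t ^ (a - 1)) c hr]
  rw [smul_eq_mul, uGamma]
  field_simp

lemma gammaMeasure_Iio_of_nonpos {a r c : ℝ} (hc : c ≤ 0) : gammaMeasure a r (Set.Iio c) = 0 := by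
  rw [gammaMeasure, withDensity_apply _ measurableSet_Iio]
  exact lintegral_gammaPDF_of_nonpos hc

lemma gammaMeasure_singleton {a r c : ℝ} : gammaMeasure a r {c} = 0 := by
  rw [gammaMeasure, withDensity_apply _ (measurableSet_singleton c),
    Measure.restrict_eq_zero.mpr (measure_singleton c), lintegral_zero_measure]

lemma gammaMeasure_Iio {a r c : ℝ} (ha : 0 < a) (hr : 0 < r) (hc : 0 ≤ c) :
    gammaMeasure a r (Set.Iio c) = ENNReal.ofReal (1 - uGamma a (r * c) / Real.Gamma a) := by
  have : IsProbabilityMeasure (gammaMeasure a r) := isProbabilityMeasure_gammaMeasure ha hr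
  have hIci : gammaMeasure a r (Ici c) = ENNReal.ofReal (uGamma a (r * c) / Real.Gamma a) := by
    have heq : gammaMeasure a r (Ici c) = gammaMeasure a r (Ioi c) := by
      refine le_antisymm ?_ (measure_mono Ioi_subset_Ici_self)
      calc gammaMeasure a r (Ici c) = gammaMeasure a r (Ioi c ∪ {c}) := by rw [Ioi_union_left]
        _ ≤ gammaMeasure a r (Ioi c) + gammaMeasure a r {c} := measure_union_le _ _
        _ = gammaMeasure a r (Ioi c) := by rw [gammaMeasure_singleton, add_zero]
    rw [heq]; exact gammaMeasure_Ioi ha hr hc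
  have hIio : Iio c = (Ici c)ᶜ := compl_Ici.symm
  rw [hIio, measure_compl measurableSet_Ici (measure_ne_top _ _), measure_univ, hIci,
    ← ENNReal.ofReal_one, ← ENNReal.ofReal_sub _ (by
      have := uGamma_nonneg (a := a) (x := r * c) (by positivity); positivity)]

lemma K_eq {v w aa cc Pj : ℝ} (hv : 0 < v) (hw : 0 < w) (haa : 0 < aa) (hcc : 0 < cc)
    (hPj : 0 < Pj) :
    (∫⁻ h, gammaMeasure v w⁻¹ (Set.Iio ((cc - aa * h) / Pj)) ∂(expMeasure 1))
      = ENNReal.ofReal ((1 - Real.exp (-(cc / aa)))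
          - ∫ x in (0:ℝ)..(cc / aa), Real.exp (-x) * (uGamma v ((cc - aa * x) / (w * Pj)) / Real.Gamma v))
    ∧ 0 ≤ (1 - Real.exp (-(cc / aa)))
          - ∫ x in (0:ℝ)..(cc / aa), Real.exp (-x) * (uGamma v ((cc - aa * x) / (w * Pj)) / Real.Gamma v) := by
  set ρ : ℝ := cc / aa with hρdef
  have hρ : 0 < ρ := div_pos hcc haa
  have hΓ : 0 < Real.Gamma v := Real.Gamma_pos_of_pos hv
  set G : ℝ → ℝ := fun x => uGamma v (max ((cc - aa * x) / (w * Pj)) 0) / Real.Gamma v with hGdef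
  have hwPj : 0 < w * Pj := mul_pos hw hPj
  have hGmono : Monotone G := by
    intro x y hxy
    rw [hGdef]
    apply div_le_div_of_nonneg_right ?_ hΓ.le
    apply uGamma_anti hv (le_max_right _ _)
    have harg : (cc - aa * y) / (w * Pj) ≤ (cc - aa * x) / (w * Pj) := by
      apply div_le_div_of_nonneg_right ?_ hwPj.le
      nlinarith [haa.le]
    exact max_le_max_right 0 harg
  have hG01 : ∀ x, 0 ≤ G x ∧ G x ≤ 1 := fun x =>
    ⟨div_nonneg (uGamma_nonneg (le_max_right _ _)) hΓ.le,
     (div_le_one hΓ).mpr (uGamma_le_Gamma hv (le_max_right _ _))⟩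
  have hGmeas : Measurable G := hGmono.measurable
  have haux : ∀ F : ℝ → ℝ, Measurable F → (∀ x, 0 ≤ F x) → (∀ x, F x ≤ 1) →
      ∀ s : Set ℝ, MeasurableSet s → s ⊆ Set.Ici 0 → volume s < ⊤ →
      IntegrableOn (fun x => Real.exp (-x) * F x) s := by
    intro F hF h0 h1 s hs hs0 hvol
    refine Integrable.mono' (g := fun _ => (1:ℝ)) (integrableOn_const hvol.ne)
      ((Real.measurable_exp.comp measurable_neg).mul hF).aestronglyMeasurable ?_
    rw [ae_restrict_iff' hs]
    filter_upwards with x hx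
    have hx0 : 0 ≤ x := hs0 hx
    rw [Real.norm_eq_abs, abs_of_nonneg (mul_nonneg (Real.exp_nonneg _) (h0 x))]
    exact mul_le_one₀ (Real.exp_le_one_iff.mpr (neg_nonpos.mpr hx0)) (h0 x) (h1 x)
  -- measurability of the lintegral integrand
  have hiio_mono : Monotone (fun t => gammaMeasure v w⁻¹ (Set.Iio t)) :=
    fun s t hst => measure_mono (Set.Iio_subset_Iio hst)
  have haff : Measurable (fun h : ℝ => (cc - aa * h) / Pj) := by fun_prop
  have hfmeas : Measurable (fun h : ℝ => gammaMeasure v w⁻¹ (Set.Iio ((cc - aa * h) / Pj))) :=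
    hiio_mono.measurable.comp haff
  have hexp : expMeasure 1 = volume.withDensity (gammaPDF 1 1) := rfl
  rw [hexp, lintegral_withDensity_eq_lintegral_mul _
    (show Measurable (gammaPDF 1 1) from (measurable_gammaPDFReal 1 1).ennreal_ofReal) hfmeas]
  have hpt : ∀ h : ℝ,
      (gammaPDF 1 1 * fun h => gammaMeasure v w⁻¹ (Set.Iio ((cc - aa * h) / Pj))) h
        = Set.indicator (Set.Ico 0 ρ)
            (fun x => ENNReal.ofReal (Real.exp (-x) * (1 - G x))) h := by
    intro h
    simp only [Pi.mul_apply]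
    rcases lt_or_ge h 0 with h0 | h0
    · rw [Set.indicator_of_notMem (fun hmem => absurd (Set.mem_Ico.mp hmem).1 (not_le.mpr h0)),
        gammaPDF_of_neg h0, zero_mul]
    rcases lt_or_ge h ρ with h1 | h1
    · rw [Set.indicator_of_mem (Set.mem_Ico.mpr ⟨h0, h1⟩)]
      have hah : aa * h < cc := by
        rw [hρdef, lt_div_iff₀ haa] at h1; linarith
      have ht0 : 0 ≤ (cc - aa * h) / Pj := div_nonneg (by linarith) hPj.le
      rw [gammaMeasure_Iio hv (inv_pos.mpr hw) ht0]
      have hpdf : gammaPDF 1 1 h = ENNReal.ofReal (Real.exp (-h)) := by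
        rw [gammaPDF_of_nonneg h0]
        norm_num [Real.Gamma_one, Real.rpow_zero, Real.one_rpow]
      rw [hpdf, ← ENNReal.ofReal_mul (Real.exp_nonneg _)]
      congr 2
      have harg : w⁻¹ * ((cc - aa * h) / Pj) = (cc - aa * h) / (w * Pj) := by
        field_simp
      have hmax : max ((cc - aa * h) / (w * Pj)) 0 = (cc - aa * h) / (w * Pj) :=
        max_eq_left (div_nonneg (by linarith) hwPj.le)
      rw [hGdef]
      simp only [harg, hmax]
    · rw [Set.indicator_of_notMem (fun hmem => absurd (Set.mem_Ico.mp hmem).2 (not_lt.mpr h1))]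
      have hah : cc ≤ aa * h := by
        rw [hρdef, div_le_iff₀ haa] at h1; linarith
      rw [gammaMeasure_Iio_of_nonpos (div_nonpos_of_nonpos_of_nonneg (by linarith) hPj.le),
        mul_zero]
  rw [lintegral_congr hpt, lintegral_indicator measurableSet_Ico _]
  have hG1 : ∀ x, 0 ≤ 1 - G x := fun x => by linarith [(hG01 x).2]
  have hintIco : IntegrableOn (fun x => Real.exp (-x) * (1 - G x)) (Set.Ico 0 ρ) :=
    haux _ (measurable_const.sub hGmeas) hG1 (fun x => by show 1 - G x ≤ 1; linarith [(hG01 x).1])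
      _ measurableSet_Ico Set.Ico_subset_Ici_self measure_Ico_lt_top
  rw [← ofReal_integral_eq_lintegral_ofReal hintIco
    (ae_of_all _ fun x => mul_nonneg (Real.exp_nonneg _) (hG1 x))]
  have hintIocG : IntegrableOn (fun x => Real.exp (-x) * G x) (Set.Ioc 0 ρ) :=
    haux _ hGmeas (fun x => (hG01 x).1) (fun x => (hG01 x).2)
      _ measurableSet_Ioc (Set.Ioc_subset_Icc_self.trans Set.Icc_subset_Ici_self) measure_Ioc_lt_top
  have hIntG : IntervalIntegrable (fun x => Real.exp (-x) * G x) volume 0 ρ := by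
    rw [intervalIntegrable_iff_integrableOn_Ioc_of_le hρ.le]; exact hintIocG
  have hIntE : IntervalIntegrable (fun x => Real.exp (-x)) volume 0 ρ :=
    (Real.continuous_exp.comp continuous_neg).intervalIntegrable _ _
  have hexpint : ∫ x in (0:ℝ)..ρ, Real.exp (-x) = 1 - Real.exp (-ρ) := by
    have hderiv : ∀ x ∈ Set.uIcc (0:ℝ) ρ, HasDerivAt (fun y => -Real.exp (-y)) (Real.exp (-x)) x := by
      intro x _
      have h := ((Real.hasDerivAt_exp (-x)).comp x (hasDerivAt_neg x)).neg
      simp at h; exact h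
    rw [intervalIntegral.integral_eq_sub_of_hasDerivAt hderiv hIntE]
    simp only [neg_zero, Real.exp_zero]
    ring
  have hGint_eq : ∫ x in (0:ℝ)..ρ, Real.exp (-x) * G x
      = ∫ x in (0:ℝ)..ρ, Real.exp (-x) * (uGamma v ((cc - aa * x) / (w * Pj)) / Real.Gamma v) := by
    apply intervalIntegral.integral_congr
    intro x hx
    rw [Set.uIcc_of_le hρ.le, Set.mem_Icc] at hx
    have hax : aa * x ≤ cc := by
      rw [hρdef] at hx
      have := hx.2
      rw [le_div_iff₀ haa] at this; linarith
    have hmax : max ((cc - aa * x) / (w * Pj)) 0 = (cc - aa * x) / (w * Pj) :=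
      max_eq_left (div_nonneg (by linarith) hwPj.le)
    rw [hGdef]; simp only [hmax]
  have hreal : ∫ x in Set.Ico 0 ρ, Real.exp (-x) * (1 - G x)
      = (1 - Real.exp (-ρ))
        - ∫ x in (0:ℝ)..ρ, Real.exp (-x) * (uGamma v ((cc - aa * x) / (w * Pj)) / Real.Gamma v) := by
    rw [MeasureTheory.integral_Ico_eq_integral_Ioo, ← MeasureTheory.integral_Ioc_eq_integral_Ioo,
      ← intervalIntegral.integral_of_le hρ.le]
    have hsplit : ∫ x in (0:ℝ)..ρ, Real.exp (-x) * (1 - G x)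
        = (∫ x in (0:ℝ)..ρ, Real.exp (-x)) - ∫ x in (0:ℝ)..ρ, Real.exp (-x) * G x := by
      rw [← intervalIntegral.integral_sub hIntE hIntG]
      apply intervalIntegral.integral_congr
      intro x _; ring
    rw [hsplit, hexpint, hGint_eq]
  constructor
  · rw [hreal]
  · rw [← hreal]
    apply setIntegral_nonneg measurableSet_Ico
    intro x _
    exact mul_nonneg (Real.exp_nonneg _) (hG1 x)

end aux

section mainaux
open Real Set

lemma expMeasure_Iio {c : ℝ} (hc : 0 ≤ c) :
    expMeasure 1 (Set.Iio c) = ENNReal.ofReal (1 - Real.exp (-c)) := by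
  rw [expMeasure, gammaMeasure_Iio one_pos (by norm_num) hc]
  norm_num [uGamma_one, Real.Gamma_one]

lemma partition_meas {Ω ι : Type*} [MeasurableSpace Ω] [Fintype ι] [MeasurableSpace ι]
    (P : Measure Ω) (Φ : Ω → ι) (hΦ : Measurable Φ) (hsing : ∀ i : ι, MeasurableSet {i})
    (E : ι → Set Ω) (hE : ∀ i, MeasurableSet (E i)) :
    P {ω | ω ∈ E (Φ ω)} = ∑ i : ι, P ({ω | Φ ω = i} ∩ E i) := by
  have hU : {ω | ω ∈ E (Φ ω)} = ⋃ i ∈ Finset.univ, ({ω | Φ ω = i} ∩ E i) := by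
    ext ω
    simp only [Set.mem_setOf_eq, Set.mem_iUnion, Set.mem_inter_iff, Finset.mem_univ,
      exists_true_left, exists_prop, true_and]
    exact ⟨fun h => ⟨Φ ω, rfl, h⟩, fun ⟨i, h1, h2⟩ => h1 ▸ h2⟩
  rw [hU, measure_biUnion_finset ?disj fun i _ =>
    ((show MeasurableSet {ω | Φ ω = i} from hΦ (hsing i)).inter (hE i))]
  case disj =>
    intro i _ j _ hij
    rw [Function.onFun]
    refine Set.disjoint_left.mpr ?_
    rintro ω ⟨h1, _⟩ ⟨h2, _⟩
    exact hij (by rw [Set.mem_setOf_eq] at h1 h2; rw [← h1, h2])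

end mainaux

/-- Paper's Theorem 2, Eq. (22): the average detection error probability
`ξ̄(μ) = P[P_j Z_Φ + σ_w² > μ] + E_H[P[ρ₁(H) + P_j Z_Φ < μ | H]]` (the second term being,
by the tower property, `P[ρ₁(H) + P_j Z_Φ < μ]` with `H ~ Exp(1)` the unknown fading gain
`|h_{t,w}|²`, `ρ₁(x) = P_t d_{tw}^{-α} x + σ_w²`), equals, for every `μ > σ_w²`,
`∑_{S≠∅} P_S (Γ(v_S,(μ-σ_w²)/(w_S P_j))/Γ(v_S)
  - ∫_0^{ρ₂} e^{-x} Γ(v_S,(μ-ρ₁(x))/(w_S P_j))/Γ(v_S) dx) + 1 - e^{-ρ₂}`,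
where `ρ₂ = (μ-σ_w²) d_{tw}^α / P_t`. -/
theorem average_detection_error_probability {Ωs : Type*} [MeasurableSpace Ωs] (P : Measure Ωs)
    [IsProbabilityMeasure P] (N : ℕ) (p : Fin N → ℝ)
    (Φ : Ωs → Finset (Fin N)) (Z : Finset (Fin N) → Ωs → ℝ) (H : Ωs → ℝ)
    (v w : Finset (Fin N) → ℝ)
    (hv : ∀ S : Finset (Fin N), S.Nonempty → 0 < v S)
    (hw : ∀ S : Finset (Fin N), S.Nonempty → 0 < w S)
    (Pj σw2 Pt dtw α : ℝ) (hPj : 0 < Pj) (hσ : 0 < σw2) (hPt : 0 < Pt)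
    (hdtw : 0 < dtw) (hα : 0 < α)
    (hΦmeas : Measurable Φ) (hZmeas : ∀ S, Measurable (Z S)) (hHmeas : Measurable H)
    (hΦlaw : ∀ S : Finset (Fin N),
      (P {ω | Φ ω = S}).toReal = (∏ k ∈ S, p k) * ∏ k ∈ Sᶜ, (1 - p k))
    (hZlaw : ∀ S : Finset (Fin N), S.Nonempty →
      Measure.map (Z S) P = gammaMeasure (v S) (w S)⁻¹)
    (hZempty : ∀ ω, Z ∅ ω = 0)
    (hHlaw : Measure.map H P = expMeasure 1)
    (hindep : IndepFun Φ (fun ω S => Z S ω) P)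
    (hHindep : IndepFun H (fun ω => (Φ ω, fun S => Z S ω)) P) :
    ∀ μ : ℝ, σw2 < μ →
      (P {ω | μ < Pj * Z (Φ ω) ω + σw2}).toReal
        + (P {ω | Pt * dtw ^ (-α) * H ω + σw2 + Pj * Z (Φ ω) ω < μ}).toReal
      = (∑ S ∈ Finset.univ.filter (fun S : Finset (Fin N) => S.Nonempty),
          ((∏ k ∈ S, p k) * ∏ k ∈ Sᶜ, (1 - p k)) *
            (uGamma (v S) ((μ - σw2) / (w S * Pj)) / Real.Gamma (v S)
              - ∫ x in (0:ℝ)..((μ - σw2) * dtw ^ α / Pt),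
                  Real.exp (-x) *
                    (uGamma (v S) ((μ - (Pt * dtw ^ (-α) * x + σw2)) / (w S * Pj))
                      / Real.Gamma (v S))))
        + 1 - Real.exp (-((μ - σw2) * dtw ^ α / Pt)) := by
  intro μ hμ
  set aa : ℝ := Pt * dtw ^ (-α) with haadef
  have haa : 0 < aa := mul_pos hPt (Real.rpow_pos_of_pos hdtw _)
  set cc : ℝ := μ - σw2 with hccdef
  have hcc : 0 < cc := by simp [hccdef]; linarith
  set ρ : ℝ := (μ - σw2) * dtw ^ α / Pt with hρdef
  have hccaa : cc / aa = ρ := by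
    rw [hρdef, haadef, Real.rpow_neg hdtw.le]
    field_simp
    exact hccdef
  have hρpos : 0 < ρ := by rw [← hccaa]; exact div_pos hcc haa
  have hsing : ∀ S : Finset (Fin N), MeasurableSet ({S} : Set (Finset (Fin N))) :=
    fun S => measurableSet_singleton S
  have hAmeas : ∀ S : Finset (Fin N), MeasurableSet {ω | Φ ω = S} :=
    fun S => hΦmeas (hsing S)
  -- per-S independence of Φ and Z S
  have hindepS : ∀ S : Finset (Fin N), IndepFun Φ (Z S) P :=
    fun S => hindep.comp measurable_id (measurable_pi_apply S)
  -- Term 1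
  have hE1meas : ∀ S, MeasurableSet {ω | μ < Pj * Z S ω + σw2} := fun S =>
    measurableSet_lt measurable_const (((hZmeas S).const_mul Pj).add_const σw2)
  have hpart1 : P {ω | μ < Pj * Z (Φ ω) ω + σw2}
      = ∑ S : Finset (Fin N), P ({ω | Φ ω = S} ∩ {ω | μ < Pj * Z S ω + σw2}) :=
    partition_meas P Φ hΦmeas hsing (fun S => {ω | μ < Pj * Z S ω + σw2}) hE1meas
  have hterm1_empty : P ({ω | Φ ω = (∅:Finset (Fin N))} ∩ {ω | μ < Pj * Z ∅ ω + σw2}) = 0 := by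
    have : {ω : Ωs | μ < Pj * Z ∅ ω + σw2} = ∅ := by
      ext ω; simp [hZempty ω]; linarith
    rw [this, Set.inter_empty, measure_empty]
  have hterm1 : ∀ S : Finset (Fin N), S.Nonempty →
      P ({ω | Φ ω = S} ∩ {ω | μ < Pj * Z S ω + σw2})
        = P {ω | Φ ω = S}
            * ENNReal.ofReal (uGamma (v S) (cc / (w S * Pj)) / Real.Gamma (v S)) := by
    intro S hS
    have hwS : 0 < w S := hw S hS
    have hev : {ω : Ωs | μ < Pj * Z S ω + σw2} = Z S ⁻¹' (Set.Ioi (cc / Pj)) := by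
      ext ω
      simp only [Set.mem_setOf_eq, Set.mem_preimage, Set.mem_Ioi, div_lt_iff₀ hPj, hccdef]
      constructor <;> intro h <;> nlinarith
    rw [hev, show {ω | Φ ω = S} = Φ ⁻¹' {S} from rfl,
      (hindepS S).measure_inter_preimage_eq_mul {S} _ (hsing S) measurableSet_Ioi,
      ← Measure.map_apply (hZmeas S) measurableSet_Ioi, hZlaw S hS,
      gammaMeasure_Ioi (hv S hS) (inv_pos.mpr (hw S hS)) (div_nonneg hcc.le hPj.le)]
    rw [show (w S)⁻¹ * (cc / Pj) = cc / (w S * Pj) from by field_simp]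
  -- Term 2
  have hE2meas : ∀ S, MeasurableSet {ω | aa * H ω + σw2 + Pj * Z S ω < μ} := fun S =>
    measurableSet_lt (((hHmeas.const_mul aa).add_const σw2).add ((hZmeas S).const_mul Pj))
      measurable_const
  have hpart2 : P {ω | aa * H ω + σw2 + Pj * Z (Φ ω) ω < μ}
      = ∑ S : Finset (Fin N), P ({ω | Φ ω = S} ∩ {ω | aa * H ω + σw2 + Pj * Z S ω < μ}) :=
    partition_meas P Φ hΦmeas hsing (fun S => {ω | aa * H ω + σw2 + Pj * Z S ω < μ}) hE2meas
  have hterm2_empty :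
      P ({ω | Φ ω = (∅:Finset (Fin N))} ∩ {ω | aa * H ω + σw2 + Pj * Z ∅ ω < μ})
        = P {ω | Φ ω = (∅:Finset (Fin N))} * ENNReal.ofReal (1 - Real.exp (-ρ)) := by
    have hev : {ω : Ωs | aa * H ω + σw2 + Pj * Z ∅ ω < μ} = H ⁻¹' (Set.Iio ρ) := by
      ext ω
      simp only [Set.mem_setOf_eq, Set.mem_preimage, Set.mem_Iio, hZempty ω, mul_zero, add_zero,
        ← hccaa, lt_div_iff₀ haa]
      constructor <;> intro h <;> nlinarith
    have hHΦ : IndepFun Φ H P := (hHindep.comp measurable_id measurable_fst).symm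
    rw [hev, show {ω | Φ ω = (∅:Finset (Fin N))} = Φ ⁻¹' {∅} from rfl,
      hHΦ.measure_inter_preimage_eq_mul {∅} _ (hsing ∅) measurableSet_Iio,
      ← Measure.map_apply hHmeas measurableSet_Iio, hHlaw, expMeasure_Iio hρpos.le]
  have hterm2 : ∀ S : Finset (Fin N), S.Nonempty →
      P ({ω | Φ ω = S} ∩ {ω | aa * H ω + σw2 + Pj * Z S ω < μ})
        = P {ω | Φ ω = S}
            * ENNReal.ofReal ((1 - Real.exp (-ρ))
              - ∫ x in (0:ℝ)..ρ, Real.exp (-x)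
                  * (uGamma (v S) ((cc - aa * x) / (w S * Pj)) / Real.Gamma (v S))) := by
    intro S hS
    have hwS : 0 < w S := hw S hS
    have hpairm : Measurable (fun ω => (Φ ω, Z S ω)) := hΦmeas.prodMk (hZmeas S)
    have hHpm : Measurable (fun ω => (H ω, (Φ ω, Z S ω))) := hHmeas.prodMk hpairm
    have hindHS : IndepFun H (fun ω => (Φ ω, Z S ω)) P :=
      hHindep.comp measurable_id (measurable_fst.prodMk ((measurable_pi_apply S).comp
        measurable_snd))
    have hmap : P.map (fun ω => (H ω, (Φ ω, Z S ω)))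
        = (P.map H).prod (P.map (fun ω => (Φ ω, Z S ω))) :=
      (indepFun_iff_map_prod_eq_prod_map_map hHmeas.aemeasurable hpairm.aemeasurable).mp hindHS
    set T : Set (ℝ × (Finset (Fin N) × ℝ)) := {q | q.2.1 = S ∧ aa * q.1 + Pj * q.2.2 < cc}
      with hTdef
    have hTmeas : MeasurableSet T := by
      rw [hTdef, Set.setOf_and]
      exact ((measurable_fst.comp measurable_snd) (hsing S)).inter
        (measurableSet_lt ((measurable_fst.const_mul aa).add
          ((measurable_snd.snd).const_mul Pj)) measurable_const)
    have hev : {ω | Φ ω = S} ∩ {ω | aa * H ω + σw2 + Pj * Z S ω < μ}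
        = (fun ω => (H ω, (Φ ω, Z S ω))) ⁻¹' T := by
      ext ω
      simp only [Set.mem_inter_iff, Set.mem_setOf_eq, Set.mem_preimage, hTdef, hccdef]
      constructor
      · rintro ⟨h1, h2⟩; exact ⟨h1, by nlinarith⟩
      · rintro ⟨h1, h2⟩; exact ⟨h1, by nlinarith⟩
    have : IsProbabilityMeasure (P.map (fun ω => (Φ ω, Z S ω))) :=
      Measure.isProbabilityMeasure_map hpairm.aemeasurable
    rw [hev, ← Measure.map_apply hHpm hTmeas, hmap, Measure.prod_apply hTmeas]
    have hsec : ∀ h : ℝ, (P.map fun ω => (Φ ω, Z S ω)) (Prod.mk h ⁻¹' T)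
        = P {ω | Φ ω = S} * gammaMeasure (v S) (w S)⁻¹ (Set.Iio ((cc - aa * h) / Pj)) := by
      intro h
      have hset : Prod.mk h ⁻¹' T = {S} ×ˢ Set.Iio ((cc - aa * h) / Pj) := by
        ext q
        simp only [Set.mem_preimage, hTdef, Set.mem_setOf_eq, Set.mem_prod,
          Set.mem_singleton_iff, Set.mem_Iio, lt_div_iff₀ hPj]
        constructor
        · rintro ⟨h1, h2⟩; exact ⟨h1, by nlinarith⟩
        · rintro ⟨h1, h2⟩; exact ⟨h1, by nlinarith⟩
      rw [hset, Measure.map_apply hpairm ((hsing S).prod measurableSet_Iio),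
        show (fun ω => (Φ ω, Z S ω)) ⁻¹' ({S} ×ˢ Set.Iio ((cc - aa * h) / Pj))
          = Φ ⁻¹' {S} ∩ Z S ⁻¹' (Set.Iio ((cc - aa * h) / Pj)) from rfl,
        (hindepS S).measure_inter_preimage_eq_mul {S} _ (hsing S) measurableSet_Iio,
        ← Measure.map_apply (hZmeas S) measurableSet_Iio, hZlaw S hS]
      rfl
    rw [lintegral_congr hsec, lintegral_const_mul' _ _ (measure_ne_top P _), hHlaw]
    congr 1
    have hK := K_eq (hv S hS) hwS haa hcc hPj
    rw [hK.1, hccaa]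
  -- nonnegativity facts
  have hU_nonneg : ∀ S : Finset (Fin N), S.Nonempty →
      0 ≤ uGamma (v S) (cc / (w S * Pj)) / Real.Gamma (v S) := fun S hS =>
    div_nonneg (uGamma_nonneg (div_nonneg hcc.le (mul_pos (hw S hS) hPj).le))
      (Real.Gamma_pos_of_pos (hv S hS)).le
  have hI_nonneg : ∀ S : Finset (Fin N), S.Nonempty →
      0 ≤ (1 - Real.exp (-ρ))
        - ∫ x in (0:ℝ)..ρ, Real.exp (-x)
            * (uGamma (v S) ((cc - aa * x) / (w S * Pj)) / Real.Gamma (v S)) := by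
    intro S hS
    have h := (K_eq (hv S hS) (hw S hS) haa hcc hPj).2
    rwa [hccaa] at h
  -- the sum of the probabilities is 1
  have hfilterempty : Finset.univ.filter (fun S : Finset (Fin N) => ¬ S.Nonempty) = {∅} := by
    ext S; simp [Finset.not_nonempty_iff_eq_empty]
  have hsumP : ∑ S : Finset (Fin N), ((∏ k ∈ S, p k) * ∏ k ∈ Sᶜ, (1 - p k)) = 1 := by
    have h1 := partition_meas P Φ hΦmeas hsing (fun _ => Set.univ) (fun _ => MeasurableSet.univ)
    simp only [Set.inter_univ, Set.mem_univ, Set.setOf_true, measure_univ] at h1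
    have h2 : (1 : ENNReal).toReal
        = (∑ S : Finset (Fin N), P {ω | Φ ω = S}).toReal := by rw [← h1]
    rw [ENNReal.toReal_sum (fun S _ => measure_ne_top P _)] at h2
    simp only [hΦlaw] at h2
    rw [← h2, ENNReal.toReal_one]
  have hsplitP := Finset.sum_filter_add_sum_filter_not Finset.univ
    (fun S : Finset (Fin N) => S.Nonempty)
    (fun S => ((∏ k ∈ S, p k) * ∏ k ∈ Sᶜ, (1 - p k)))
  rw [hfilterempty, Finset.sum_singleton, hsumP] at hsplitP
  -- rewrite the goal's integrand
  have hint_eq : ∀ S : Finset (Fin N),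
      (∫ x in (0:ℝ)..ρ, Real.exp (-x)
          * (uGamma (v S) ((μ - (aa * x + σw2)) / (w S * Pj)) / Real.Gamma (v S)))
        = ∫ x in (0:ℝ)..ρ, Real.exp (-x)
            * (uGamma (v S) ((cc - aa * x) / (w S * Pj)) / Real.Gamma (v S)) := by
    intro S
    apply intervalIntegral.integral_congr
    intro x _
    dsimp only
    rw [show μ - (aa * x + σw2) = cc - aa * x from by rw [hccdef]; ring]
  -- assembly
  rw [hpart1, hpart2, ENNReal.toReal_sum (fun S _ => measure_ne_top P _),
    ENNReal.toReal_sum (fun S _ => measure_ne_top P _), ← Finset.sum_add_distrib,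
    ← Finset.sum_filter_add_sum_filter_not Finset.univ (fun S : Finset (Fin N) => S.Nonempty),
    hfilterempty, Finset.sum_singleton, hterm1_empty, hterm2_empty]
  have hexp_le_one : Real.exp (-ρ) ≤ 1 := Real.exp_le_one_iff.mpr (by linarith)
  have hterm_fin : ∀ S ∈ Finset.univ.filter (fun S : Finset (Fin N) => S.Nonempty),
      (P ({ω | Φ ω = S} ∩ {ω | μ < Pj * Z S ω + σw2})).toReal
        + (P ({ω | Φ ω = S} ∩ {ω | aa * H ω + σw2 + Pj * Z S ω < μ})).toReal
      = ((∏ k ∈ S, p k) * ∏ k ∈ Sᶜ, (1 - p k)) *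
            (uGamma (v S) (cc / (w S * Pj)) / Real.Gamma (v S)
              - ∫ x in (0:ℝ)..ρ, Real.exp (-x)
                  * (uGamma (v S) ((cc - aa * x) / (w S * Pj)) / Real.Gamma (v S)))
        + ((∏ k ∈ S, p k) * ∏ k ∈ Sᶜ, (1 - p k)) * (1 - Real.exp (-ρ)) := by
    intro S hSmem
    have hS : S.Nonempty := (Finset.mem_filter.mp hSmem).2
    rw [hterm1 S hS, hterm2 S hS, ENNReal.toReal_mul, ENNReal.toReal_mul,
      ENNReal.toReal_ofReal (hU_nonneg S hS), ENNReal.toReal_ofReal (hI_nonneg S hS), hΦlaw S]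
    ring
  rw [Finset.sum_congr rfl hterm_fin, Finset.sum_add_distrib, ← Finset.sum_mul,
    ENNReal.toReal_mul, ENNReal.toReal_ofReal (by linarith), hΦlaw ∅, ENNReal.toReal_zero,
    zero_add]
  simp only [hint_eq]
  linear_combination (1 - Real.exp (-ρ)) * hsplitP
end

section
/- In the setting of Lemma 3 (H, Y_1, …, Y_N independent Exp(1); d_{tr}, d_k > 0, α > 0, P_t, P_j, σ_r² > 0, R > 0; φ = (2^R − 1)/P_t; λ = e^{−d_{tr}^{α} φ σ_r²}), let δ(τ) = P[ H d_{tr}^{−α} < φ ( Σ_{k=1}^N 1{Y_k d_k^{−α}/σ_r² < τ} P_j Y_k d_k^{−α} + σ_r² ) ] for τ > 0. Then δ(τ) → 1 − λ ∏_{k=1}^N 1/(φ P_j d_k^{−α} d_{tr}^{α} + 1) as τ → ∞, and moreover the limit equals the all-jammer outage probability: P[ H d_{tr}^{−α} < φ ( Σ_{k=1}^N P_j Y_k d_k^{−α} + σ_r² ) ] = 1 − λ ∏_{k=1}^N 1/(φ P_j d_k^{−α} d_{tr}^{α} + 1). (Paper's Corollary 3, Eq. (34).) -/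
open MeasureTheory ProbabilityTheory Finset Filter

section Aux

open Set Real
open scoped ENNReal

lemma exp_Iio (t : ℝ) : expMeasure 1 (Set.Iio t) = ENNReal.ofReal (1 - Real.exp (-t)) := by
  have h1 : expMeasure 1 = MeasureTheory.volume.withDensity (exponentialPDF 1) := rfl
  rw [h1, withDensity_apply _ measurableSet_Iio,
    Measure.restrict_congr_set Iio_ae_eq_Iic, lintegral_exponentialPDF_eq_antiDeriv one_pos t]
  split_ifs with h
  · simp
  · rw [ENNReal.ofReal_zero, eq_comm, ENNReal.ofReal_eq_zero]
    have : (1:ℝ) ≤ Real.exp (-t) := Real.one_le_exp (by linarith)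
    linarith

lemma exp_lint (a : ℝ) (ha : 0 ≤ a) :
    ∫⁻ t, ENNReal.ofReal (Real.exp (-(a * t))) ∂(expMeasure 1)
      = ENNReal.ofReal (1 / (1 + a)) := by
  have h1 : expMeasure 1 = MeasureTheory.volume.withDensity (exponentialPDF 1) := rfl
  have hb : (0:ℝ) < 1 + a := by linarith
  rw [h1, lintegral_withDensity_eq_lintegral_mul _
    (by exact (measurable_exponentialPDFReal 1).ennreal_ofReal)
    (by fun_prop)]
  have hpt : ∀ t : ℝ, (exponentialPDF 1 * fun t => ENNReal.ofReal (Real.exp (-(a * t)))) t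
      = (Set.Ici (0:ℝ)).indicator (fun t => ENNReal.ofReal (Real.exp (-((1+a) * t)))) t := by
    intro t
    by_cases h : 0 ≤ t
    · simp only [Pi.mul_apply, exponentialPDF_eq, if_pos h, Set.indicator_of_mem (Set.mem_Ici.2 h),
        one_mul]
      rw [← ENNReal.ofReal_mul (Real.exp_nonneg _), ← Real.exp_add]
      congr 2
      ring
    · rw [Set.indicator_of_notMem (by simpa using h)]
      simp [exponentialPDF_eq, if_neg h]
  rw [lintegral_congr hpt, lintegral_indicator measurableSet_Ici _]
  have hint : IntegrableOn (fun t : ℝ => Real.exp (-((1+a) * t))) (Set.Ici 0) := by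
    rw [integrableOn_Ici_iff_integrableOn_Ioi]
    have := exp_neg_integrableOn_Ioi 0 hb
    refine this.congr_fun (fun x _ => by ring_nf) measurableSet_Ioi
  rw [← ofReal_integral_eq_lintegral_ofReal hint
    (Filter.Eventually.of_forall fun t => (Real.exp_nonneg _))]
  congr 1
  rw [integral_Ici_eq_integral_Ioi]
  have := integral_comp_mul_left_Ioi (fun u : ℝ => Real.exp (-u)) 0 hb
  simp only [mul_zero] at this
  rw [show (fun t : ℝ => Real.exp (-((1+a) * t))) = fun t : ℝ => (fun u : ℝ => Real.exp (-u)) ((1+a) * t) from rfl,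
    this, integral_exp_neg_Ioi_zero, smul_eq_mul, mul_one, one_div]

lemma joint_law {Ω : Type*} [MeasurableSpace Ω] (P : Measure Ω) [IsProbabilityMeasure P]
    {ι : Type*} [Fintype ι] (X : ι → Ω → ℝ) (hX : ∀ i, Measurable (X i))
    (hindep : iIndepFun X P)
    (μs : ι → Measure ℝ) [∀ i, IsProbabilityMeasure (μs i)]
    (hlaw : ∀ i, Measure.map (X i) P = μs i) :
    Measure.map (fun ω i => X i ω) P = Measure.pi μs := by
  refine (Measure.pi_eq (μ := μs) (μ' := Measure.map (fun ω i => X i ω) P) fun s hs => ?_).symm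
  rw [Measure.map_apply (measurable_pi_lambda _ hX) (MeasurableSet.univ_pi hs)]
  have hpre : (fun ω i => X i ω) ⁻¹' (Set.pi Set.univ s) = ⋂ i, X i ⁻¹' s i := by
    ext ω; simp [Set.mem_pi]
  rw [hpre, hindep.meas_iInter fun i => ⟨s i, hs i, rfl⟩]
  exact Finset.prod_congr rfl fun i _ => by
    rw [← hlaw i, Measure.map_apply (hX i) (hs i)]

lemma lintegral_pi_prod {N : ℕ} (μ : Measure ℝ) [SigmaFinite μ]
    (f : Fin N → ℝ → ℝ≥0∞) (hf : ∀ i, Measurable (f i)) :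
    ∫⁻ y : Fin N → ℝ, ∏ i, f i (y i) ∂(Measure.pi fun _ => μ)
      = ∏ i, ∫⁻ t, f i t ∂μ := by
  induction N with
  | zero => simp
  | succ n ih =>
    have h := (measurePreserving_piFinSuccAbove (fun _ : Fin (n+1) => μ) 0).symm
      (MeasurableEquiv.piFinSuccAbove (fun _ : Fin (n+1) => ℝ) 0)
    have hF : Measurable fun y : Fin (n+1) → ℝ => ∏ i, f i (y i) :=
      Finset.measurable_prod _ fun i _ => (hf i).comp (measurable_pi_apply i)
    rw [← h.lintegral_comp hF]
    have : ∀ p : ℝ × (Fin n → ℝ),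
        (∏ i, f i (((MeasurableEquiv.piFinSuccAbove (fun _ : Fin (n+1) => ℝ) 0).symm p) i))
        = f 0 p.1 * ∏ j : Fin n, f j.succ (p.2 j) := by
      intro p
      simp_rw [MeasurableEquiv.piFinSuccAbove_symm_apply, Fin.insertNthEquiv,
        Fin.prod_univ_succ, Fin.insertNth_zero]
      simp [Fin.zero_succAbove, Fin.cons_zero, Fin.cons_succ]
    simp_rw [this]
    rw [lintegral_prod_mul (f := f 0) (g := fun y : Fin n → ℝ => ∏ j, f j.succ (y j)) ((hf 0).aemeasurable)
      ((Finset.measurable_prod _ fun j _ => (hf j.succ).comp (measurable_pi_apply j)).aemeasurable),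
      ih (fun j => f j.succ) (fun j => hf j.succ), Fin.prod_univ_succ]

lemma nu_calc (N : ℕ) (c : ℝ) (hc : 0 ≤ c) (a : Fin N → ℝ) (ha : ∀ k, 0 ≤ a k) :
    Measure.pi (fun _ : Option (Fin N) => expMeasure 1)
      {x | x none < c + ∑ k, a k * x (some k)}
    = 1 - ENNReal.ofReal (Real.exp (-c)) * ∏ k, ENNReal.ofReal (1 / (1 + a k)) := by
  haveI : IsProbabilityMeasure (expMeasure 1) := isProbabilityMeasure_expMeasure one_pos
  have hBmeas : MeasurableSet {x : Option (Fin N) → ℝ | x none < c + ∑ k, a k * x (some k)} :=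
    measurableSet_lt (measurable_pi_apply none)
      (measurable_const.add (Finset.measurable_sum _ fun k _ =>
        (measurable_pi_apply (some k) : Measurable fun x : Option (Fin N) → ℝ => x (some k)).const_mul (a k)))
  rw [← Measure.pi_map_piOptionEquivProd (fun _ : Option (Fin N) => expMeasure 1),
    Measure.map_apply (MeasurableEquiv.measurable _) hBmeas]
  have hpre : (MeasurableEquiv.piOptionEquivProd (fun _ : Option (Fin N) => ℝ)).symm ⁻¹'
      {x | x none < c + ∑ k, a k * x (some k)}
      = {p : (Fin N → ℝ) × ℝ | p.2 < c + ∑ k, a k * p.1 k} := rfl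
  rw [hpre]
  have hSmeas : MeasurableSet {p : (Fin N → ℝ) × ℝ | p.2 < c + ∑ k, a k * p.1 k} :=
    measurableSet_lt measurable_snd
      (measurable_const.add (Finset.measurable_sum _ fun k _ =>
        ((measurable_pi_apply k : Measurable fun x : Fin N → ℝ => x k).comp measurable_fst).const_mul (a k)))
  rw [Measure.prod_apply hSmeas]
  have hslice : ∀ y : Fin N → ℝ,
      (expMeasure 1) (Prod.mk y ⁻¹'  {p : (Fin N → ℝ) × ℝ | p.2 < c + ∑ k, a k * p.1 k})
      = 1 - ENNReal.ofReal (Real.exp (-(c + ∑ k, a k * y k))) := by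
    intro y
    rw [show Prod.mk y ⁻¹' {p : (Fin N → ℝ) × ℝ | p.2 < c + ∑ k, a k * p.1 k}
      = Set.Iio (c + ∑ k, a k * y k) from rfl, exp_Iio, ENNReal.ofReal_sub _ (Real.exp_nonneg _),
      ENNReal.ofReal_one]
  simp_rw [hslice]
  -- a.e. nonnegativity of coordinates
  have hae : ∀ᵐ y ∂(Measure.pi fun _ : Fin N => expMeasure 1), ∀ k, 0 ≤ y k := by
    rw [MeasureTheory.ae_all_iff]
    intro k
    rw [ae_iff]
    have h0 : {y : Fin N → ℝ | ¬ 0 ≤ y k} = Function.eval k ⁻¹' Set.Iio 0 := by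
      ext y; simp [not_le]
    rw [h0]
    exact Measure.pi_eval_preimage_null (μ := fun _ : Fin N => expMeasure 1)
      (by rw [exp_Iio]; simp)
  have hgmeas : Measurable fun y : Fin N → ℝ =>
      ENNReal.ofReal (Real.exp (-(c + ∑ k, a k * y k))) :=
    ((measurable_const.add (Finset.measurable_sum _ fun k _ =>
      (measurable_pi_apply k : Measurable fun x : Fin N → ℝ => x k).const_mul (a k))).neg.exp).ennreal_ofReal
  have hK : ∫⁻ y, ENNReal.ofReal (Real.exp (-(c + ∑ k, a k * y k)))
        ∂(Measure.pi fun _ : Fin N => expMeasure 1)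
      = ENNReal.ofReal (Real.exp (-c)) * ∏ k, ENNReal.ofReal (1 / (1 + a k)) := by
    have hpt : ∀ y : Fin N → ℝ, ENNReal.ofReal (Real.exp (-(c + ∑ k, a k * y k)))
        = ENNReal.ofReal (Real.exp (-c)) * ∏ k, ENNReal.ofReal (Real.exp (-(a k * y k))) := by
      intro y
      rw [← ENNReal.ofReal_prod_of_nonneg (fun k _ => Real.exp_nonneg _),
        ← ENNReal.ofReal_mul (Real.exp_nonneg _), ← Real.exp_sum]
      congr 1
      rw [← Real.exp_add, Finset.sum_neg_distrib]
      ring_nf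
    simp_rw [hpt]
    rw [lintegral_const_mul _ (Finset.measurable_prod (f := fun k (y : Fin N → ℝ) => ENNReal.ofReal (Real.exp (-(a k * y k)))) _ fun k _ =>
        ((((measurable_pi_apply k : Measurable fun x : Fin N → ℝ => x k).const_mul (a k)).neg.exp).ennreal_ofReal :
          Measurable fun y : Fin N → ℝ => ENNReal.ofReal (Real.exp (-(a k * y k))))),
      lintegral_pi_prod (expMeasure 1) (fun k t => ENNReal.ofReal (Real.exp (-(a k * t))))
        (fun k => ((((measurable_id'.const_mul (a k)).neg.exp).ennreal_ofReal :
          Measurable fun t : ℝ => ENNReal.ofReal (Real.exp (-(a k * t))))))]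
    congr 1
    exact Finset.prod_congr rfl fun k _ => exp_lint (a k) (ha k)
  have hle : ∀ᵐ y ∂(Measure.pi fun _ : Fin N => expMeasure 1),
      ENNReal.ofReal (Real.exp (-(c + ∑ k, a k * y k))) ≤ 1 := by
    filter_upwards [hae] with y hy
    refine ENNReal.ofReal_le_one.2 (Real.exp_le_one_iff.2 ?_)
    have : 0 ≤ ∑ k, a k * y k := Finset.sum_nonneg fun k _ => mul_nonneg (ha k) (hy k)
    linarith
  have hfin : ∫⁻ y, ENNReal.ofReal (Real.exp (-(c + ∑ k, a k * y k)))
      ∂(Measure.pi fun _ : Fin N => expMeasure 1) ≠ ⊤ := by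
    rw [hK]
    exact ENNReal.mul_ne_top ENNReal.ofReal_ne_top
      (ENNReal.prod_lt_top fun k _ => ENNReal.ofReal_lt_top).ne
  rw [lintegral_sub hgmeas hfin hle, lintegral_one, measure_univ, hK]

end Aux

/-- Paper's Corollary 3, Eq. (34): as the jammer selection threshold `τ → ∞`, the
transmission outage probability `δ(τ)` converges to
`1 - λ ∏_k 1/(φ P_j d_k^{-α} d_tr^α + 1)`, and this limit equals the all-jammer outage
probability `P[H d_tr^{-α} < φ (∑_k P_j Y_k d_k^{-α} + σ_r²)]`. -/
theorem outage_tendsto_infinite_threshold {Ω : Type*} [MeasurableSpace Ω] (P : Measure Ω)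
    [IsProbabilityMeasure P] (N : ℕ) (H : Ω → ℝ) (Y : Fin N → Ω → ℝ)
    (hHmeas : Measurable H) (hYmeas : ∀ k, Measurable (Y k))
    (hindep : iIndepFun
      (fun i : Option (Fin N) => Option.elim i H Y) P)
    (hHlaw : Measure.map H P = expMeasure 1)
    (hYlaw : ∀ k, Measure.map (Y k) P = expMeasure 1)
    (dtr : ℝ) (d : Fin N → ℝ) (α Pt Pj σr2 R : ℝ)
    (hdtr : 0 < dtr) (hd : ∀ k, 0 < d k) (hα : 0 < α) (hPt : 0 < Pt) (hPj : 0 < Pj)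
    (hσ : 0 < σr2) (hR : 0 < R)
    (φ lam : ℝ) (hφ : φ = ((2:ℝ) ^ R - 1) / Pt)
    (hlam : lam = Real.exp (-(dtr ^ α * φ * σr2)))
    (δ : ℝ → ℝ)
    (hδ : ∀ τ : ℝ, δ τ = (P {ω | H ω * dtr ^ (-α) <
        φ * ((∑ k, if Y k ω * d k ^ (-α) / σr2 < τ then Pj * Y k ω * d k ^ (-α) else 0)
          + σr2)}).toReal) :
    Tendsto δ atTop
        (nhds (1 - lam * ∏ k, 1 / (φ * Pj * d k ^ (-α) * dtr ^ α + 1))) ∧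
    (P {ω | H ω * dtr ^ (-α) <
        φ * ((∑ k, Pj * Y k ω * d k ^ (-α)) + σr2)}).toReal
      = 1 - lam * ∏ k, 1 / (φ * Pj * d k ^ (-α) * dtr ^ α + 1) := by
  haveI : IsProbabilityMeasure (expMeasure 1) := isProbabilityMeasure_expMeasure one_pos
  have ht : (0:ℝ) < dtr ^ α := Real.rpow_pos_of_pos hdtr α
  have hφpos : 0 < φ := by
    rw [hφ]
    apply div_pos _ hPt
    have : (1:ℝ) = (2:ℝ) ^ (0:ℝ) := by rw [Real.rpow_zero]
    have h2 : (2:ℝ) ^ (0:ℝ) < (2:ℝ) ^ R := Real.rpow_lt_rpow_of_exponent_lt one_lt_two hR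
    rw [Real.rpow_zero] at h2
    linarith
  set c : ℝ := dtr ^ α * φ * σr2 with hc_def
  have hc : 0 ≤ c := by positivity
  set a : Fin N → ℝ := fun k => φ * Pj * d k ^ (-α) * dtr ^ α with ha_def
  have hdk : ∀ k, (0:ℝ) < d k ^ (-α) := fun k => Real.rpow_pos_of_pos (hd k) _
  have ha0 : ∀ k, 0 ≤ a k := fun k => by
    have := hdk k; dsimp [a]; positivity
  -- the full-sum set rewritten
  have hset : {ω | H ω * dtr ^ (-α) < φ * ((∑ k, Pj * Y k ω * d k ^ (-α)) + σr2)}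
      = (fun ω (i : Option (Fin N)) => Option.elim i H Y ω) ⁻¹'
        {x | x none < c + ∑ k, a k * x (some k)} := by
    ext ω
    simp only [Set.mem_setOf_eq, Set.mem_preimage]
    rw [Real.rpow_neg hdtr.le, ← div_eq_mul_inv, div_lt_iff₀ ht]
    have hrw : φ * ((∑ k, Pj * Y k ω * d k ^ (-α)) + σr2) * dtr ^ α
        = c + ∑ k, a k * Y k ω := by
      rw [mul_add, add_mul, Finset.mul_sum, Finset.sum_mul, add_comm]
      congr 1
      · dsimp [c]; ring
      · exact Finset.sum_congr rfl fun k _ => by simp only [ha_def]; ring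
    rw [hrw]
    exact Iff.rfl
  have hXmeas : ∀ i : Option (Fin N), Measurable (Option.elim i H Y) := by
    rintro (_|k); exacts [hHmeas, hYmeas k]
  have hBmeas : MeasurableSet {x : Option (Fin N) → ℝ | x none < c + ∑ k, a k * x (some k)} :=
    measurableSet_lt (measurable_pi_apply none)
      (measurable_const.add (Finset.measurable_sum _ fun k _ =>
        (measurable_pi_apply (some k) : Measurable fun x : Option (Fin N) → ℝ => x (some k)).const_mul (a k)))
  have hmap : Measure.map (fun ω (i : Option (Fin N)) => Option.elim i H Y ω) P
      = Measure.pi (fun _ : Option (Fin N) => expMeasure 1) :=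
    joint_law P _ hXmeas hindep _ (by rintro (_|k); exacts [hHlaw, hYlaw k])
  have key : P {ω | H ω * dtr ^ (-α) < φ * ((∑ k, Pj * Y k ω * d k ^ (-α)) + σr2)}
      = 1 - ENNReal.ofReal (Real.exp (-c)) * ∏ k, ENNReal.ofReal (1 / (1 + a k)) := by
    rw [hset, ← Measure.map_apply (measurable_pi_lambda _ hXmeas) hBmeas, hmap,
      nu_calc N c hc a ha0]
  -- bound for toReal subtraction
  have hK1 : ENNReal.ofReal (Real.exp (-c)) * ∏ k, ENNReal.ofReal (1 / (1 + a k)) ≤ 1 := by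
    have h1 : ENNReal.ofReal (Real.exp (-c)) ≤ 1 :=
      ENNReal.ofReal_le_one.2 (Real.exp_le_one_iff.2 (by linarith))
    have h2 : (∏ k, ENNReal.ofReal (1 / (1 + a k))) ≤ 1 := by
      calc (∏ k, ENNReal.ofReal (1 / (1 + a k))) ≤ ∏ _k : Fin N, 1 :=
            Finset.prod_le_prod' fun k _ => ENNReal.ofReal_le_one.2
              ((div_le_one (by have := ha0 k; linarith)).2 (by have := ha0 k; linarith))
        _ = 1 := by simp
    calc ENNReal.ofReal (Real.exp (-c)) * ∏ k, ENNReal.ofReal (1 / (1 + a k))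
        ≤ 1 * 1 := mul_le_mul' h1 h2
      _ = 1 := by simp
  have part2 : (P {ω | H ω * dtr ^ (-α) < φ * ((∑ k, Pj * Y k ω * d k ^ (-α)) + σr2)}).toReal
      = 1 - lam * ∏ k, 1 / (φ * Pj * d k ^ (-α) * dtr ^ α + 1) := by
    rw [key, ENNReal.toReal_sub_of_le hK1 ENNReal.one_ne_top, ENNReal.toReal_one,
      ENNReal.toReal_mul, ENNReal.toReal_ofReal (Real.exp_nonneg _), ENNReal.toReal_prod]
    congr 1
    rw [hlam]
    congr 1
    exact Finset.prod_congr rfl fun k _ => by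
      rw [ENNReal.toReal_ofReal (by have := ha0 k; positivity)]
      dsimp [a]; rw [add_comm]
  refine ⟨?_, part2⟩
  -- Part 1: convergence
  set G : Set Ω := {ω | ∀ k, 0 ≤ Y k ω} with hG_def
  have hGnull : P Gᶜ = 0 := by
    have hsub : Gᶜ ⊆ ⋃ k, Y k ⁻¹' Set.Iio 0 := by
      intro ω hω
      simp only [hG_def, Set.mem_compl_iff, Set.mem_setOf_eq, not_forall, not_le] at hω
      obtain ⟨k, hk⟩ := hω
      exact Set.mem_iUnion.2 ⟨k, hk⟩
    refine measure_mono_null hsub (measure_iUnion_null fun k => ?_)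
    rw [← Measure.map_apply (hYmeas k) measurableSet_Iio, hYlaw k, exp_Iio]
    simp
  have hPG : ∀ s : Set Ω, P (s ∩ G) = P s := fun s => measure_inter_conull hGnull
  set A : ℝ → Set Ω := fun τ => {ω | H ω * dtr ^ (-α) <
      φ * ((∑ k, if Y k ω * d k ^ (-α) / σr2 < τ then Pj * Y k ω * d k ^ (-α) else 0)
        + σr2)} with hA_def
  set Af : Set Ω := {ω | H ω * dtr ^ (-α) <
      φ * ((∑ k, Pj * Y k ω * d k ^ (-α)) + σr2)} with hAf_def
  have hterm_nonneg : ∀ ω ∈ G, ∀ k, (0:ℝ) ≤ Pj * Y k ω * d k ^ (-α) := fun ω hω k =>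
    mul_nonneg (mul_nonneg hPj.le (hω k)) (hdk k).le
  have hsub : ∀ {τ τ' : ℝ}, τ ≤ τ' → A τ ∩ G ⊆ A τ' ∩ G := by
    intro τ τ' hττ ω hω
    obtain ⟨h1, hg⟩ := hω
    simp only [hA_def, Set.mem_setOf_eq] at h1
    refine ⟨?_, hg⟩
    show H ω * dtr ^ (-α) < _
    refine lt_of_lt_of_le h1 ?_
    refine mul_le_mul_of_nonneg_left (add_le_add_left (Finset.sum_le_sum fun k _ => ?_) σr2)
      hφpos.le
    by_cases hcond : Y k ω * d k ^ (-α) / σr2 < τ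
    · rw [if_pos hcond, if_pos (lt_of_lt_of_le hcond hττ)]
    · rw [if_neg hcond]
      split_ifs with h
      · exact hterm_nonneg ω hg k
      · exact le_refl 0
  have hsubfull : ∀ τ : ℝ, A τ ∩ G ⊆ Af ∩ G := by
    intro τ ω hω
    obtain ⟨h1, hg⟩ := hω
    simp only [hA_def, Set.mem_setOf_eq] at h1
    refine ⟨?_, hg⟩
    show H ω * dtr ^ (-α) < _
    refine lt_of_lt_of_le h1 ?_
    refine mul_le_mul_of_nonneg_left (add_le_add_left (Finset.sum_le_sum fun k _ => ?_) σr2)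
      hφpos.le
    split_ifs with h
    · exact le_refl _
    · exact hterm_nonneg ω hg k
  have hcover : Af ∩ G ⊆ ⋃ n : ℕ, (A n ∩ G) := by
    rintro ω ⟨h1, hg⟩
    simp only [hAf_def, Set.mem_setOf_eq] at h1
    obtain ⟨n, hn⟩ := exists_nat_gt (∑ k, |Y k ω * d k ^ (-α) / σr2|)
    refine Set.mem_iUnion.2 ⟨n, ⟨?_, hg⟩⟩
    have heq : (∑ k, if Y k ω * d k ^ (-α) / σr2 < (n:ℝ)
        then Pj * Y k ω * d k ^ (-α) else 0) = ∑ k, Pj * Y k ω * d k ^ (-α) :=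
      Finset.sum_congr rfl fun k _ => by
        rw [if_pos (lt_of_le_of_lt (le_trans (le_abs_self _)
          (Finset.single_le_sum (f := fun j => |Y j ω * d j ^ (-α) / σr2|)
            (fun j _ => abs_nonneg _) (Finset.mem_univ k))) hn)]
    show H ω * dtr ^ (-α) < _
    rw [heq]
    exact h1
  have hfmono : Monotone (fun τ : ℝ => P (A τ ∩ G)) := fun τ τ' h => measure_mono (hsub h)
  have htendsto : Tendsto (fun τ : ℝ => P (A τ ∩ G)) atTop (nhds (⨆ τ : ℝ, P (A τ ∩ G))) :=
    tendsto_atTop_iSup hfmono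
  have hsup : (⨆ τ : ℝ, P (A τ ∩ G)) = P Af := by
    apply le_antisymm
    · exact iSup_le fun τ => by
        rw [← hPG Af]; exact measure_mono (hsubfull τ)
    · rw [← hPG Af]
      calc P (Af ∩ G) ≤ P (⋃ n : ℕ, A n ∩ G) := measure_mono hcover
        _ = ⨆ n : ℕ, P (A n ∩ G) := Directed.measure_iUnion
            (Monotone.directed_le fun m n h => hsub (by exact_mod_cast h))
        _ ≤ ⨆ τ : ℝ, P (A τ ∩ G) := iSup_le fun n => le_iSup (fun τ : ℝ => P (A τ ∩ G)) (n:ℝ)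
  rw [hsup] at htendsto
  have htendsto' : Tendsto (fun τ : ℝ => P (A τ)) atTop (nhds (P Af)) := by
    have : (fun τ : ℝ => P (A τ ∩ G)) = fun τ : ℝ => P (A τ) := funext fun τ => hPG _
    rwa [this] at htendsto
  have hδ' : δ = fun τ => (P (A τ)).toReal := funext fun τ => hδ τ
  rw [hδ', ← part2]
  exact (ENNReal.tendsto_toReal (measure_ne_top P Af)).comp htendsto'
end
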